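/- (QLMS gradient) Let x ∈ ℍ^N and d ∈ ℍ be fixed, and for w ∈ ℍ^N define the error e(w) = d − Σ_{m=1}^{N} w_m x_m (i.e. e = d − wᵀx) and the real-valued cost J(w) = e(w)* e(w) = |e(w)|². Then for every n the left GHR derivative of J with respect to the component w_n satisfies ∂J/∂w_n = −½ x_n · e(w)*, i.e. the row-vector gradient is D_w J = −½ xᵀ e*. -/

import Mathlib

open scoped Quaternion

noncomputable section

/-- The imaginary unit `i` of the quaternions. -/
def qI : ℍ[ℝ] := ⟨0, 1, 0, 0⟩
/-- The imaginary unit `j` of the quaternions. -/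
def qJ : ℍ[ℝ] := ⟨0, 0, 1, 0⟩
/-- The imaginary unit `k` of the quaternions. -/
def qK : ℍ[ℝ] := ⟨0, 0, 0, 1⟩

/-- Left GHR derivative `∂f/∂w_n` of a quaternion function of a quaternion vector variable,
with respect to the `n`-th component (the other components held fixed):
`¼(∂f/∂a − (∂f/∂b) i − (∂f/∂c) j − (∂f/∂d) k)`, the partials being the real directional
(Fréchet) derivatives in directions `1, i, j, k` of the `n`-th coordinate. -/
def ghrV {N : ℕ} (f : (Fin N → ℍ[ℝ]) → ℍ[ℝ]) (w : Fin N → ℍ[ℝ]) (n : Fin N) : ℍ[ℝ] :=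
  (1 / 4 : ℝ) • (fderiv ℝ f w (Pi.single n 1) - fderiv ℝ f w (Pi.single n qI) * qI
    - fderiv ℝ f w (Pi.single n qJ) * qJ - fderiv ℝ f w (Pi.single n qK) * qK)

open Quaternion in
instance : ContinuousStar ℍ[ℝ] := ⟨by
  have : (star : ℍ[ℝ] → ℍ[ℝ]) = fun q => ((2 * q.re : ℝ) : ℍ[ℝ]) - q := by
    funext q; exact q.star_eq_two_re_sub
  rw [this]
  exact (continuous_coe.comp (continuous_const.mul continuous_re)).sub continuous_id⟩

instance : StarModule ℝ ℍ[ℝ] := ⟨fun r a => by ext <;> simp⟩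

lemma qIre : qI.re = 0 := rfl
lemma qIi : qI.imI = 1 := rfl
lemma qIj : qI.imJ = 0 := rfl
lemma qIk : qI.imK = 0 := rfl
lemma qJre : qJ.re = 0 := rfl
lemma qJi : qJ.imI = 0 := rfl
lemma qJj : qJ.imJ = 1 := rfl
lemma qJk : qJ.imK = 0 := rfl
lemma qKre : qK.re = 0 := rfl
lemma qKi : qK.imI = 0 := rfl
lemma qKj : qK.imJ = 0 := rfl
lemma qKk : qK.imK = 1 := rfl
lemma key (p E : ℍ[ℝ]) :
    (1/4:ℝ) • ((star E * -(1 * p) + star (-(1 * p)) * E)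
      - (star E * -(qI * p) + star (-(qI * p)) * E) * qI
      - (star E * -(qJ * p) + star (-(qJ * p)) * E) * qJ
      - (star E * -(qK * p) + star (-(qK * p)) * E) * qK) =
      -(1 / 2 : ℍ[ℝ]) * (p * star E) := by
  have h2 : -(1/2 : ℍ[ℝ]) = ((-(1/2) : ℝ) : ℍ[ℝ]) := by
    push_cast [Quaternion.coe_div, Quaternion.coe_one]
    norm_num
    exact (Quaternion.coe_natCast 2).symm
  rw [h2]
  ext <;>
    simp only [qIre, qIi, qIj, qIk, qJre, qJi, qJj, qJk, qKre, qKi, qKj, qKk, Quaternion.re_mul, Quaternion.imI_mul, Quaternion.imJ_mul,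
      Quaternion.imK_mul, Quaternion.re_star, Quaternion.imI_star, Quaternion.imJ_star,
      Quaternion.imK_star, Quaternion.re_neg, Quaternion.imI_neg, Quaternion.imJ_neg,
      Quaternion.imK_neg, Quaternion.re_add, Quaternion.imI_add, Quaternion.imJ_add,
      Quaternion.imK_add, Quaternion.re_sub, Quaternion.imI_sub, Quaternion.imJ_sub,
      Quaternion.imK_sub, Quaternion.re_smul, Quaternion.imI_smul, Quaternion.imJ_smul,
      Quaternion.imK_smul, Quaternion.re_coe, Quaternion.imI_coe, Quaternion.imJ_coe,
      Quaternion.imK_coe, Quaternion.re_one, Quaternion.imI_one, Quaternion.imJ_one,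
      Quaternion.imK_one, smul_eq_mul] <;>
    ring

/-- **QLMS gradient**: for the cost `J(w) = e(w)* e(w)` with `e(w) = d − Σ_m w_m x_m`,
the GHR derivative with respect to each component is `∂J/∂w_n = −½ x_n e(w)*`. -/
theorem qlms_gradient {N : ℕ} (x : Fin N → ℍ[ℝ]) (d : ℍ[ℝ]) (w : Fin N → ℍ[ℝ]) :
    ∀ n : Fin N,
      ghrV (fun v => star (d - ∑ m, v m * x m) * (d - ∑ m, v m * x m)) w n =
        -(1 / 2 : ℍ[ℝ]) * (x n * star (d - ∑ m, w m * x m)) := by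
  intro n
  set L : (Fin N → ℍ[ℝ]) →L[ℝ] ℍ[ℝ] :=
    ∑ m, ((ContinuousLinearMap.mul ℝ ℍ[ℝ]).flip (x m)).comp
      (ContinuousLinearMap.proj m) with hLdef
  have hL : ∀ v : Fin N → ℍ[ℝ], L v = ∑ m, v m * x m := by
    intro v
    simp [hLdef, ContinuousLinearMap.sum_apply]
  have hfun : (fun v : Fin N → ℍ[ℝ] => d - ∑ m, v m * x m) = (fun v => d - L v) := by
    funext v; rw [hL]
  have he : HasFDerivAt (fun v : Fin N → ℍ[ℝ] => d - ∑ m, v m * x m) (-L) w := by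
    rw [hfun]
    simpa using L.hasFDerivAt.const_sub d
  set A : (Fin N → ℍ[ℝ]) →L[ℝ] ℍ[ℝ] :=
    ((starL' ℝ : ℍ[ℝ] ≃L[ℝ] ℍ[ℝ]) : ℍ[ℝ] →L[ℝ] ℍ[ℝ]).comp (-L) with hAdef
  have hf : HasFDerivAt (fun v => star (d - ∑ m, v m * x m) * (d - ∑ m, v m * x m))
      ((star (d - ∑ m, w m * x m)) • (-L) + A.smulRight (d - ∑ m, w m * x m)) w :=
    he.star.mul' he
  have hLs : ∀ q : ℍ[ℝ], L (Pi.single n q) = q * x n := by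
    intro q
    rw [hL]
    simp [Pi.single_apply, ite_mul]
  unfold ghrV
  rw [hf.fderiv]
  simp only [ContinuousLinearMap.add_apply, ContinuousLinearMap.smul_apply,
    ContinuousLinearMap.smulRight_apply, ContinuousLinearMap.coe_comp', Function.comp_apply,
    ContinuousLinearMap.neg_apply, hAdef, hLs, starL'_apply, smul_eq_mul, star_neg]
  exact key (x n) (d - ∑ m, w m * x m)
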